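/- Let K be a field of characteristic zero, s ∈ K invertible, q = s², and R(q) the quantum trigonometric R-matrix R(q) = 1 + Σ_{k,l}[(q-q⁻¹)θ(l-k) + ((s-s⁻¹)²/2)δ_{k,l}]E_{k,l}⊗E_{l,k}. Then R(q)·R^{t₁}(q⁻¹)·R(q⁻¹) = R^{t₁}(q⁻¹), i.e. R(q) conjugation fixes the partial transpose R^{t₁}(q⁻¹); equivalently R(q) commutes with R^{t₁}(q⁻¹). -/

import Mathlib

open Matrix Kronecker

/-- The step function θ with values in a field: θ(x)=1 for x>0, θ(0)=1/2, θ(x)=0 for x<0. -/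
noncomputable def thetaK (K : Type*) [Field K] (x : ℤ) : K :=
  if 0 < x then 1 else if x = 0 then 2⁻¹ else 0

/-- The quantum trigonometric R-matrix
`R(q) = 1 + Σ_{k,l} [(q-q⁻¹)θ(l-k) + ((s-s⁻¹)²/2)δ_{k,l}]·E_{k,l} ⊗ E_{l,k}`, with `q = s²`. -/
noncomputable def Rq (N : ℕ) (K : Type*) [Field K] (q s : K) :
    Matrix (Fin N × Fin N) (Fin N × Fin N) K :=
  1 + ∑ k : Fin N, ∑ l : Fin N,
    ((q - q⁻¹) * thetaK K ((l : ℤ) - (k : ℤ))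
        + (s - s⁻¹) ^ 2 / 2 * (if k = l then 1 else 0)) •
      (Matrix.single k l (1 : K) ⊗ₖ Matrix.single l k (1 : K))

/-- Partial transpose in the first tensor factor. -/
def pt1 {N : ℕ} {K : Type*} [Field K]
    (M : Matrix (Fin N × Fin N) (Fin N × Fin N) K) :
    Matrix (Fin N × Fin N) (Fin N × Fin N) K :=
  Matrix.of fun p q => M (q.1, p.2) (p.1, q.2)

noncomputable def coeffK {N : ℕ} (K : Type*) [Field K] (q s : K) (k l : Fin N) : K :=
  (q - q⁻¹) * thetaK K ((l : ℤ) - (k : ℤ)) + (s - s⁻¹) ^ 2 / 2 * (if k = l then 1 else 0)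

theorem Rq_apply {N : ℕ} {K : Type*} [Field K] (q s : K) (i j m n : Fin N) :
    Rq N K q s (i, j) (m, n) =
      (if i = m ∧ j = n then 1 else 0) +
        (if j = m ∧ n = i then coeffK K q s i m else 0) := by
  simp only [Rq, Matrix.add_apply, Matrix.sum_apply, Matrix.smul_apply, kroneckerMap_apply,
    Matrix.single, Matrix.of_apply, smul_eq_mul, Matrix.one_apply, Prod.mk.injEq, coeffK]
  by_cases h1 : j = m
  · subst h1
    by_cases h2 : n = i
    · subst h2; simp [ite_and, Finset.sum_ite_eq, Finset.sum_ite_eq']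
    · simp [h2, ite_and, Finset.sum_ite_eq, Finset.sum_ite_eq']
  · simp [h1, ite_and, Finset.sum_ite_eq, Finset.sum_ite_eq', Ne.symm h1]

theorem pt1_apply {N : ℕ} {K : Type*} [Field K]
    (M : Matrix (Fin N × Fin N) (Fin N × Fin N) K) (i j m n : Fin N) :
    pt1 M (i, j) (m, n) = M (m, j) (i, n) := rfl

theorem Rq_mul_apply {N : ℕ} {K : Type*} [Field K] (q s : K)
    (M : Matrix (Fin N × Fin N) (Fin N × Fin N) K) (i j m n : Fin N) :
    (Rq N K q s * M) (i, j) (m, n) =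
      M (i, j) (m, n) + coeffK K q s i j * M (j, i) (m, n) := by
  rw [Matrix.mul_apply, Fintype.sum_prod_type]
  simp only [Rq_apply, add_mul, ite_mul, one_mul, zero_mul, Finset.sum_add_distrib]
  congr 1 <;> simp [ite_and, Finset.sum_ite_eq, Finset.sum_ite_eq']

theorem mul_Rq_apply {N : ℕ} {K : Type*} [Field K] (q s : K)
    (M : Matrix (Fin N × Fin N) (Fin N × Fin N) K) (i j m n : Fin N) :
    (M * Rq N K q s) (i, j) (m, n) =
      M (i, j) (m, n) + coeffK K q s n m * M (i, j) (n, m) := by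
  rw [Matrix.mul_apply, Fintype.sum_prod_type]
  simp only [Rq_apply, mul_add, mul_ite, mul_one, mul_zero, Finset.sum_add_distrib]
  congr 1 <;> simp [ite_and, Finset.sum_ite_eq, Finset.sum_ite_eq', mul_comm]

theorem coeffK_diag {N : ℕ} (K : Type*) [Field K] [CharZero K] {s : K} (hs : s ≠ 0)
    (k : Fin N) : coeffK K (s ^ 2) s k k = s ^ 2 - 1 := by
  simp only [coeffK, thetaK, sub_self, lt_self_iff_false, if_false, if_pos rfl, if_true, mul_one]
  have h2 : (2 : K) ≠ 0 := two_ne_zero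
  field_simp
  ring

theorem coeffK_add_inv {N : ℕ} (K : Type*) [Field K] (q s : K) {k l : Fin N} (h : k ≠ l) :
    coeffK K q s k l + coeffK K q⁻¹ s⁻¹ k l = 0 := by
  simp only [coeffK, if_neg h, mul_zero, add_zero, inv_inv]
  ring

theorem thetaK_mul_neg (K : Type*) [Field K] {x : ℤ} (h : x ≠ 0) :
    thetaK K x * thetaK K (-x) = 0 := by
  unfold thetaK
  split_ifs <;> simp_all <;> omega

theorem coeffK_mul_swap {N : ℕ} (K : Type*) [Field K] (q s q' s' : K) {k l : Fin N}
    (h : k ≠ l) : coeffK K q s k l * coeffK K q' s' l k = 0 := by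
  have h2 : l ≠ k := h.symm
  have hx : ((l : ℤ) - (k : ℤ)) ≠ 0 := by
    simp only [sub_ne_zero]
    exact_mod_cast fun hh => h2 (Fin.ext (by exact_mod_cast hh))
  have key : thetaK K ((l : ℤ) - (k : ℤ)) * thetaK K ((k : ℤ) - (l : ℤ)) = 0 := by
    have := thetaK_mul_neg K hx
    rwa [neg_sub] at this
  simp only [coeffK, if_neg h, if_neg h2, mul_zero, add_zero]
  calc (q - q⁻¹) * thetaK K ((l : ℤ) - (k : ℤ)) * ((q' - q'⁻¹) * thetaK K ((k : ℤ) - (l : ℤ)))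
      = (q - q⁻¹) * (q' - q'⁻¹) * (thetaK K ((l : ℤ) - (k : ℤ)) * thetaK K ((k : ℤ) - (l : ℤ))) := by
        ring
    _ = 0 := by rw [key, mul_zero]

/-- `R(q)·R^{t₁}(q⁻¹)·R(q⁻¹) = R^{t₁}(q⁻¹)`; equivalently `R(q)`
commutes with `R^{t₁}(q⁻¹)`. -/
theorem Rq_fixes_pt1_Rq_inv (N : ℕ) (hN : 1 ≤ N)
    (K : Type*) [Field K] [CharZero K] (s : K) (hs : s ≠ 0) (q : K) (hq : q = s ^ 2) :
    Rq N K q s * pt1 (Rq N K q⁻¹ s⁻¹) * Rq N K q⁻¹ s⁻¹ = pt1 (Rq N K q⁻¹ s⁻¹) ∧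
      Rq N K q s * pt1 (Rq N K q⁻¹ s⁻¹) = pt1 (Rq N K q⁻¹ s⁻¹) * Rq N K q s := by
  have hq0 : q ≠ 0 := by rw [hq]; exact pow_ne_zero 2 hs
  have hqinv : q⁻¹ = (s⁻¹) ^ 2 := by rw [hq, inv_pow]
  have hdiag : ∀ k : Fin N, coeffK K q s k k = q - 1 := fun k => by
    rw [hq]; exact coeffK_diag K hs k
  have hdiag' : ∀ k : Fin N, coeffK K q⁻¹ s⁻¹ k k = q⁻¹ - 1 := fun k => by
    rw [hqinv]; exact coeffK_diag K (inv_ne_zero hs) k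
  have hcomm : Rq N K q s * pt1 (Rq N K q⁻¹ s⁻¹) = pt1 (Rq N K q⁻¹ s⁻¹) * Rq N K q s := by
    ext ⟨i, j⟩ ⟨m, n⟩
    rw [Rq_mul_apply, mul_Rq_apply]
    simp only [pt1_apply, Rq_apply]
    congr 1
    by_cases hij : i = j
    · subst hij
      by_cases hnm : n = m
      · subst hnm
        rw [hdiag i, hdiag n]
      · have h1 : ¬(m = i ∧ i = n) := fun h => hnm (h.2.symm.trans h.1.symm)
        have h2 : ¬(n = i ∧ i = m) := fun h => hnm (h.1.trans h.2)
        simp [h1, h2, hnm, Ne.symm hnm]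
    · by_cases hc : m = j ∧ i = n
      · obtain ⟨rfl, rfl⟩ := hc
        simp [hij, Ne.symm hij]
      · have hc2 : ¬(n = i ∧ j = m) := fun h => hc ⟨h.2.symm, h.1.symm⟩
        simp [hij, hc, hc2, Ne.symm hij]
  have hinv : Rq N K q s * Rq N K q⁻¹ s⁻¹ = 1 := by
    ext ⟨i, j⟩ ⟨m, n⟩
    rw [Rq_mul_apply]
    simp only [Rq_apply, Matrix.one_apply, Prod.mk.injEq]
    by_cases hij : i = j
    · subst hij
      by_cases him : i = m
      · subst him
        by_cases hni : n = i
        · subst hni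
          simp only [and_self, if_pos rfl, if_true]
          rw [hdiag n, hdiag' n]
          field_simp
          ring
        · simp [hni, Ne.symm hni]
      · simp [him]
    · by_cases hjm : j = m
      · subst hjm
        by_cases hni : n = i
        · subst hni
          simp only [hij, Ne.symm hij, and_self, and_true, true_and, if_true, if_false,
            false_and, and_false]
          have hadd := coeffK_add_inv K q s hij
          linear_combination hadd
        · simp [hij, hni, Ne.symm hni, Ne.symm hij]
      · by_cases hc : i = m ∧ n = j
        · obtain ⟨rfl, rfl⟩ := hc
          simp only [Ne.symm hjm, hjm, false_and, and_false, if_false, and_self, if_true,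
            if_pos rfl]
          have hmul := coeffK_mul_swap K q s q⁻¹ s⁻¹ hij
          linear_combination hmul
        · simp [hjm, hc]
  refine ⟨?_, hcomm⟩
  calc Rq N K q s * pt1 (Rq N K q⁻¹ s⁻¹) * Rq N K q⁻¹ s⁻¹
      = pt1 (Rq N K q⁻¹ s⁻¹) * Rq N K q s * Rq N K q⁻¹ s⁻¹ := by rw [hcomm]
    _ = pt1 (Rq N K q⁻¹ s⁻¹) * (Rq N K q s * Rq N K q⁻¹ s⁻¹) := by rw [mul_assoc]
    _ = pt1 (Rq N K q⁻¹ s⁻¹) := by rw [hinv, mul_one]
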